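/- Let A be a semisimple complex unital Banach algebra and a, b ∈ A. If for every invertible x ∈ A, x + a is invertible if and only if x + b is invertible, then a = b. -/

import Mathlib

/-- For every `y` in a complex normed algebra there is a scalar `lam`
such that `y - lam • 1` is a unit. -/
private lemma exists_smul_one_sub_isUnit {A : Type*} [NormedRing A] [NormedAlgebra ℂ A]
    [CompleteSpace A] (y : A) : ∃ lam : ℂ, IsUnit (y - lam • (1 : A)) := by
  rcases subsingleton_or_nontrivial A with hs | hs
  · exact ⟨0, by simpa using isUnit_of_subsingleton (y - (0 : ℂ) • (1 : A))⟩
  set r : ℝ := ‖y‖ + 1 with hr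
  have hrpos : (0 : ℝ) < r := by positivity
  have hlam : ((r : ℂ)) ≠ 0 := by
    simp only [ne_eq, Complex.ofReal_eq_zero]; exact hrpos.ne'
  refine ⟨(r : ℂ), ?_⟩
  have hx : ‖((r : ℂ))⁻¹ • y‖ < 1 := by
    rw [norm_smul, norm_inv, Complex.norm_real, Real.norm_of_nonneg hrpos.le,
      inv_mul_lt_iff₀ hrpos, mul_one, hr]
    linarith
  have hunit1 : IsUnit ((1 : A) - ((r : ℂ))⁻¹ • y) := (Units.oneSub _ hx).isUnit
  have hfac : (r : ℂ) • ((1 : A) - ((r : ℂ))⁻¹ • y) = (r : ℂ) • (1 : A) - y := by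
    rw [smul_sub, smul_smul, mul_inv_cancel₀ hlam, one_smul]
  have hsval : IsUnit ((r : ℂ) • (1 : A) - y) := by
    rw [← hfac, Algebra.smul_def ((r : ℂ)) ((1 : A) - ((r : ℂ))⁻¹ • y)]
    exact ((isUnit_iff_ne_zero.mpr hlam).map (algebraMap ℂ A)).mul hunit1
  simpa using hsval.neg

section main

variable {A : Type*} [NormedRing A] [NormedAlgebra ℂ A] [CompleteSpace A]

/-- Scaled form of the hypothesis: the invertibility equivalence holds for all scalar
multiples of the pair `(a, b)`. -/
private lemma rule (a b : A) (h : ∀ x : A, IsUnit x → (IsUnit (x + a) ↔ IsUnit (x + b)))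
    (x : A) (hx : IsUnit x) (t : ℂ) : IsUnit (x + t • a) ↔ IsUnit (x + t • b) := by
  rcases eq_or_ne t 0 with rfl | ht
  · simp
  have htu : IsUnit ((t : ℂ) • (1 : A)) := by
    rw [Algebra.smul_def, mul_one]
    exact (isUnit_iff_ne_zero.mpr ht).map (algebraMap ℂ A)
  have htu' : IsUnit ((t⁻¹ : ℂ) • (1 : A)) := by
    rw [Algebra.smul_def, mul_one]
    exact (isUnit_iff_ne_zero.mpr (inv_ne_zero ht)).map (algebraMap ℂ A)
  have hx' : IsUnit ((t⁻¹ : ℂ) • x) := by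
    have : (t⁻¹ : ℂ) • x = ((t⁻¹ : ℂ) • (1 : A)) * x := by
      rw [smul_mul_assoc, one_mul]
    rw [this]; exact htu'.mul hx
  have key : ∀ d : A, x + t • d = ((t : ℂ) • (1 : A)) * (((t⁻¹ : ℂ) • x) + d) := by
    intro d
    rw [mul_add, smul_mul_assoc, one_mul, smul_smul, mul_inv_cancel₀ ht, one_smul,
      smul_mul_assoc, one_mul]
  rw [key a, key b]
  constructor
  · intro hu
    have := (Units.isUnit_units_mul htu.unit (((t⁻¹ : ℂ) • x) + a)).mp (by simpa using hu)
    have := (h _ hx').mp this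
    simpa using (Units.isUnit_units_mul htu.unit (((t⁻¹ : ℂ) • x) + b)).mpr this
  · intro hu
    have := (Units.isUnit_units_mul htu.unit (((t⁻¹ : ℂ) • x) + b)).mp (by simpa using hu)
    have := (h _ hx').mpr this
    simpa using (Units.isUnit_units_mul htu.unit (((t⁻¹ : ℂ) • x) + a)).mpr this

/-- The key analytic fact: every unit stays a unit after translation by any scalar
multiple of `c = a - b`.  (Equivalently, `u⁻¹ * c` is quasinilpotent for each unit `u`.) -/
private lemma key_translate (a b : A)
    (h : ∀ x : A, IsUnit x → (IsUnit (x + a) ↔ IsUnit (x + b))) :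
    ∀ v : A, IsUnit v → ∀ z : ℂ, IsUnit (v + z • (a - b)) := by
  intro v hv z
  by_contra hbad
  set c : A := a - b with hc
  have hcb : c + b = a := by rw [hc]; abel
  -- the path τ ↦ v + (τ z) • c, τ real
  set g : ℝ → A := fun τ => v + (((τ : ℝ) : ℂ) * z) • c with hg
  have hgc : Continuous g := by
    apply continuous_const.add
    exact (Complex.continuous_ofReal.mul continuous_const).smul continuous_const
  have hUopen : IsOpen {x : A | IsUnit x} := Units.isOpen
  set S : Set ℝ := Set.Icc (0:ℝ) 1 ∩ g ⁻¹' {x : A | IsUnit x}ᶜ with hSdef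
  have hS1 : (1:ℝ) ∈ S := by
    refine ⟨⟨zero_le_one, le_refl 1⟩, ?_⟩
    simp only [Set.mem_preimage, Set.mem_compl_iff, Set.mem_setOf_eq, hg]
    rwa [Complex.ofReal_one, one_mul]
  have hSclosed : IsClosed S :=
    isClosed_Icc.inter (hUopen.isClosed_compl.preimage hgc)
  have hSbdd : BddBelow S := ⟨0, fun τ hτ => hτ.1.1⟩
  set t0 : ℝ := sInf S with ht0def
  have ht0S : t0 ∈ S := hSclosed.csInf_mem ⟨1, hS1⟩ hSbdd
  have ht0bad : ¬ IsUnit (v + ((t0 : ℂ) * z) • c) := ht0S.2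
  have ht0pos : 0 < t0 := by
    rcases (ht0S.1.1).lt_or_eq with hpos | heq
    · exact hpos
    · exfalso
      apply ht0bad
      rw [← heq]
      simpa using hv
  have hgood : ∀ τ : ℝ, 0 ≤ τ → τ < t0 → IsUnit (v + ((τ : ℂ) * z) • c) := by
    intro τ h0 hlt
    by_contra hb
    have hmem : τ ∈ S := ⟨⟨h0, hlt.le.trans ht0S.1.2⟩, hb⟩
    exact absurd (csInf_le hSbdd hmem) (not_le.mpr hlt)
  -- choose the number of subdivision steps
  obtain ⟨δ, hδpos, hδ⟩ := Metric.isOpen_iff.mp hUopen v hv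
  obtain ⟨k, hk⟩ := exists_nat_gt ((‖((t0 : ℂ) * z)‖ * ‖a‖ + 1) / δ)
  have hkpos : 0 < (k : ℝ) := lt_of_le_of_lt (by positivity) hk
  have hk0 : 0 < k := by exact_mod_cast hkpos
  have hkC : (k : ℂ) ≠ 0 := Nat.cast_ne_zero.mpr hk0.ne'
  set s : ℂ := ((t0 : ℂ) * z) / (k : ℂ) with hs
  set w : ℕ → A := fun m => v + (((m : ℂ) / (k : ℂ)) * ((t0 : ℂ) * z)) • c with hw
  -- each w m, m < k, is a unit (it lies on the good part of the segment)
  have hwunit : ∀ m : ℕ, m < k → IsUnit (w m) := by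
    intro m hm
    have hcast : ((((m : ℝ) / (k : ℝ) * t0 : ℝ) : ℂ)) * z
        = ((m : ℂ) / (k : ℂ)) * ((t0 : ℂ) * z) := by
      push_cast
      ring
    have h0 : (0:ℝ) ≤ (m : ℝ) / (k : ℝ) * t0 := by positivity
    have hlt : (m : ℝ) / (k : ℝ) * t0 < t0 := by
      have h1 : (m : ℝ) / (k : ℝ) < 1 := (div_lt_one hkpos).mpr (by exact_mod_cast hm)
      nlinarith
    have := hgood _ h0 hlt
    rw [hcast] at this
    simpa only [hw] using this
  -- the last chain element equals the bad point
  have hwk : w k = v + ((t0 : ℂ) * z) • c := by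
    simp only [hw]
    rw [div_self hkC, one_mul]
  -- base case of the chain
  have hbase : IsUnit (w 0 + s • a) := by
    apply hδ
    have hw0 : w 0 = v := by simp [hw]
    rw [Metric.mem_ball, hw0, dist_eq_norm, add_sub_cancel_left, norm_smul, hs, norm_div]
    have hnk : ‖(k : ℂ)‖ = (k : ℝ) := by
      simp
    rw [hnk]
    have h1 : ‖(t0 : ℂ) * z‖ * ‖a‖ + 1 < (k : ℝ) * δ := by
      rw [div_lt_iff₀ hδpos] at hk
      linarith
    rw [div_mul_eq_mul_div, div_lt_iff₀ hkpos]
    nlinarith [norm_nonneg ((t0 : ℂ) * z), norm_nonneg a, hδpos]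
  -- successive coefficients differ by s
  have hstep : ∀ n : ℕ, w (n + 1) = w n + s • c := by
    intro n
    have hco : (((n : ℕ) + 1 : ℕ) : ℂ) / (k : ℂ) * ((t0 : ℂ) * z)
        = ((n : ℂ) / (k : ℂ)) * ((t0 : ℂ) * z) + s := by
      rw [hs]
      push_cast
      field_simp
    simp only [hw, hco, add_smul, add_assoc]
  -- transport invertibility along the chain
  have hchain : ∀ m : ℕ, m ≤ k - 1 → IsUnit (w m + s • a) := by
    intro m
    induction m with
    | zero => intro _; exact hbase
    | succ n ih =>
      intro hn
      have hn' : n ≤ k - 1 := le_trans (Nat.le_succ n) hn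
      have hwn1 : IsUnit (w (n + 1)) := hwunit (n + 1) (by omega)
      have heq : w (n + 1) + s • b = w n + s • a := by
        rw [hstep n, add_assoc, ← smul_add, hcb]
      have hiff := rule a b h (w (n + 1)) hwn1 s
      rw [heq] at hiff
      exact hiff.mpr (ih hn')
  -- final step: one more application of the rule lands on the bad point
  have hF : IsUnit (w (k - 1) + s • a) := hchain (k - 1) le_rfl
  have hiff := rule a b h (w (k - 1) + s • a) hF (-s)
  have hL : w (k - 1) + s • a + (-s) • a = w (k - 1) := by
    rw [neg_smul, add_assoc, add_neg_cancel, add_zero]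
  have hR : w (k - 1) + s • a + (-s) • b = w k := by
    have h1 : w (k - 1) + s • a + (-s) • b = w (k - 1) + s • c := by
      rw [neg_smul, add_assoc, ← sub_eq_add_neg, ← smul_sub, ← hc]
    have h2 : k - 1 + 1 = k := by omega
    rw [h1, ← hstep (k - 1), h2]
  rw [hL, hR] at hiff
  have : IsUnit (w k) := hiff.mp (hwunit (k - 1) (by omega))
  rw [hwk] at this
  exact ht0bad this

/-- From the key fact, `1 + y * c` is invertible for every `y`. -/
private lemma one_add_mul_isUnit (a b : A)
    (h : ∀ x : A, IsUnit x → (IsUnit (x + a) ↔ IsUnit (x + b))) (y : A) :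
    IsUnit (1 + y * (a - b)) := by
  set c : A := a - b with hc
  obtain ⟨lam, hu⟩ := exists_smul_one_sub_isUnit (A := A) y
  set u : A := y - lam • (1 : A) with hudef
  -- `e₁ = 1 + u * c` is a unit, since `e₁ = u * (u⁻¹ + c)`.
  have hinv : (↑hu.unit⁻¹ : A) * u = 1 := by
    have := hu.unit.inv_mul
    simpa [hudef] using this
  have hinv' : u * (↑hu.unit⁻¹ : A) = 1 := by
    have := hu.unit.mul_inv
    simpa [hudef] using this
  have he₁ : IsUnit (1 + u * c) := by
    have hfac : u * ((↑hu.unit⁻¹ : A) + (1 : ℂ) • c) = 1 + u * c := by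
      rw [mul_add, hinv', one_smul]
    rw [← hfac]
    exact hu.mul (key_translate a b h _ (by exact hu.unit⁻¹.isUnit) 1)
  -- `e₂ = 1 + lam • (e₁⁻¹ * c)` is a unit, since `e₂ = e₁⁻¹ * (e₁ + lam • c)`.
  have he₂ : IsUnit (1 + lam • ((↑he₁.unit⁻¹ : A) * c)) := by
    have hfac : (↑he₁.unit⁻¹ : A) * ((1 + u * c) + lam • c)
        = 1 + lam • ((↑he₁.unit⁻¹ : A) * c) := by
      rw [mul_add, mul_smul_comm]
      congr 1
      simpa using he₁.unit.inv_mul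
    rw [← hfac]
    exact (he₁.unit⁻¹.isUnit).mul (key_translate a b h _ he₁ lam)
  -- their product is `1 + y * c`.
  have hprod : (1 + u * c) * (1 + lam • ((↑he₁.unit⁻¹ : A) * c)) = 1 + y * c := by
    have hmulinv : (1 + u * c) * (↑he₁.unit⁻¹ : A) = 1 := by
      simpa using he₁.unit.mul_inv
    calc (1 + u * c) * (1 + lam • ((↑he₁.unit⁻¹ : A) * c))
        = (1 + u * c) + lam • (((1 + u * c) * (↑he₁.unit⁻¹ : A)) * c) := by
          rw [mul_add, mul_one, mul_smul_comm, mul_assoc]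
      _ = (1 + u * c) + lam • c := by rw [hmulinv, one_mul]
      _ = 1 + (u + lam • (1 : A)) * c := by
          rw [add_mul, smul_mul_assoc, one_mul, add_assoc]
      _ = 1 + y * c := by
          rw [hudef]
          congr 2
          abel
  rw [← hprod]
  exact he₁.mul he₂

end main

theorem eq_of_invertibility_variation_on_units {A : Type*} [NormedRing A]
    [NormedAlgebra ℂ A] [CompleteSpace A] (hA : Ideal.jacobson (⊥ : Ideal A) = ⊥)
    (a b : A) (h : ∀ x : A, IsUnit x → (IsUnit (x + a) ↔ IsUnit (x + b))) : a = b := by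
  set c : A := a - b with hc
  -- `c` lies in every maximal left ideal.
  have hjac : c ∈ Ideal.jacobson (⊥ : Ideal A) := by
    rw [Ideal.jacobson]
    refine Submodule.mem_sInf.mpr fun M hM => ?_
    by_contra hcM
    have hlt : M < M ⊔ Ideal.span {c} := by
      refine lt_of_le_of_ne le_sup_left fun heq => hcM ?_
      rw [heq]
      exact Submodule.mem_sup_right (Ideal.subset_span rfl)
    have htop : M ⊔ Ideal.span {c} = ⊤ := hM.2.out.2 _ hlt
    have hmem : (1 : A) ∈ M ⊔ Ideal.span {c} := htop ▸ Submodule.mem_top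
    obtain ⟨m, hm, z, hz, hmz⟩ := Submodule.mem_sup.mp hmem
    obtain ⟨y, hy⟩ := Submodule.mem_span_singleton.mp hz
    have hmu : IsUnit m := by
      have hmeq : m = 1 + (-y) * c := by
        have h1 : m = 1 - z := eq_sub_of_add_eq hmz
        rw [h1, ← hy, smul_eq_mul, neg_mul, ← sub_eq_add_neg]
      rw [hmeq]
      exact one_add_mul_isUnit a b h (-y)
    exact hM.2.out.1 (Ideal.eq_top_of_isUnit_mem M hm hmu)
  rw [hA] at hjac
  have : c = 0 := by simpa using hjac
  have := sub_eq_zero.mp this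
  exact this
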